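/- arXiv:1802.08437 — 2 statements merged into one kernel-verified Lean document; each statement's English description precedes it below -/
import Mathlib

section
/- Every right-reduced ground TRS is terminating. -/
namespace KB

-- Generic ARS notions
def NF {α : Type _} (r : α → α → Prop) (a : α) : Prop := ∀ b, ¬ r a b

def SymmCl {α : Type _} (r : α → α → Prop) (a b : α) : Prop := r a b ∨ r b a

def Conv {α : Type _} (r : α → α → Prop) : α → α → Prop :=
  Relation.ReflTransGen (SymmCl r)

def Joinable {α : Type _} (r : α → α → Prop) (a b : α) : Prop :=
  ∃ c, Relation.ReflTransGen r a c ∧ Relation.ReflTransGen r b c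

def Confluent {α : Type _} (r : α → α → Prop) : Prop :=
  ∀ a b c, Relation.ReflTransGen r a b → Relation.ReflTransGen r a c → Joinable r b c

def Terminating {α : Type _} (r : α → α → Prop) : Prop :=
  WellFounded (fun a b => r b a)

def Complete {α : Type _} (r : α → α → Prop) : Prop := Terminating r ∧ Confluent r

def NormTo {α : Type _} (r : α → α → Prop) (a b : α) : Prop :=
  Relation.ReflTransGen r a b ∧ NF r b

-- First-order terms
inductive Term (F V : Type) : Type where
  | var : V → Term F V
  | app : F → List (Term F V) → Term F V

variable {F V : Type}

def Term.subst (σ : V → Term F V) : Term F V → Term F V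
  | .var x => σ x
  | .app f ts => .app f (ts.attach.map fun t => Term.subst σ t.1)
decreasing_by
  simp only [Term.app.sizeOf_spec]
  have := List.sizeOf_lt_of_mem t.2
  omega

def Term.rename (π : V → V) (t : Term F V) : Term F V :=
  t.subst (fun x => Term.var (π x))

inductive Ctx (F V : Type) : Type where
  | hole : Ctx F V
  | cons : F → List (Term F V) → Ctx F V → List (Term F V) → Ctx F V

def Ctx.fill : Ctx F V → Term F V → Term F V
  | .hole, t => t
  | .cons f l C r, t => Term.app f (l ++ C.fill t :: r)

abbrev TRS (F V : Type) := Set (Term F V × Term F V)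

def Step (R : TRS F V) (s t : Term F V) : Prop :=
  ∃ (C : Ctx F V) (σ : V → Term F V) (l r : Term F V),
    (l, r) ∈ R ∧ s = C.fill (l.subst σ) ∧ t = C.fill (r.subst σ)

inductive InVars (x : V) : Term F V → Prop where
  | var : InVars x (Term.var x)
  | app {f : F} {ts : List (Term F V)} {t : Term F V} :
      t ∈ ts → InVars x t → InVars x (Term.app f ts)

def WellFormedRule (l r : Term F V) : Prop :=
  (∀ x : V, l ≠ Term.var x) ∧ ∀ x, InVars x r → InVars x l

def IsTRS (R : TRS F V) : Prop := ∀ p ∈ R, WellFormedRule p.1 p.2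

inductive Ground : Term F V → Prop where
  | app {f : F} {ts : List (Term F V)} : (∀ t ∈ ts, Ground t) → Ground (Term.app f ts)

def GroundSys (R : TRS F V) : Prop := ∀ p ∈ R, Ground p.1 ∧ Ground p.2

def LeftReduced (R : TRS F V) : Prop := ∀ p ∈ R, NF (Step (R \ {p})) p.1
def RightReduced (R : TRS F V) : Prop := ∀ p ∈ R, NF (Step R) p.2
def Reduced (R : TRS F V) : Prop := LeftReduced R ∧ RightReduced R

def RuleVariant (p q : Term F V × Term F V) : Prop :=
  ∃ π : V → V, Function.Bijective π ∧ p.1 = q.1.rename π ∧ p.2 = q.2.rename π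

def LitSim (R S : TRS F V) : Prop :=
  (∀ p ∈ R, ∃ q ∈ S, RuleVariant p q) ∧ (∀ q ∈ S, ∃ p ∈ R, RuleVariant q p)

def Encompass (s t : Term F V) : Prop :=
  ∃ (C : Ctx F V) (σ : V → Term F V), s = C.fill (t.subst σ)

def PEncompass (s t : Term F V) : Prop := Encompass s t ∧ ¬ Encompass t s

def ReductionOrder (gt : Term F V → Term F V → Prop) : Prop :=
  Transitive gt ∧ WellFounded (fun a b => gt b a) ∧
  (∀ (C : Ctx F V) s t, gt s t → gt (C.fill s) (C.fill t)) ∧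
  (∀ (σ : V → Term F V) s t, gt s t → gt (s.subst σ) (t.subst σ))

-- positions
def subt : List ℕ → Term F V → Option (Term F V)
  | [], t => some t
  | _ :: _, Term.var _ => none
  | i :: p, Term.app _ ts => (ts[i]?).bind (subt p)

def repl : List ℕ → Term F V → Term F V → Option (Term F V)
  | [], _, u => some u
  | _ :: _, Term.var _, _ => none
  | i :: p, Term.app f ts, u =>
      (ts[i]?).bind fun w => (repl p w u).map fun w' => Term.app f (ts.set i w')

def FunPos (p : List ℕ) (t : Term F V) : Prop :=
  ∃ f ts, subt p t = some (Term.app f ts)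

def Unifier (σ : V → Term F V) (s t : Term F V) : Prop := s.subst σ = t.subst σ

def IsMGU (σ : V → Term F V) (s t : Term F V) : Prop :=
  Unifier σ s t ∧ ∀ τ, Unifier τ s t → ∃ ρ, ∀ x, (σ x).subst ρ = τ x

def VarsDisjoint (p q : Term F V × Term F V) : Prop :=
  ∀ x, ¬ ((InVars x p.1 ∨ InVars x p.2) ∧ (InVars x q.1 ∨ InVars x q.2))

def Overlap (R : TRS F V) (l1 r1 : Term F V) (p : List ℕ) (l2 r2 : Term F V) : Prop :=
  (∃ q ∈ R, RuleVariant (l1, r1) q) ∧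
  (∃ q ∈ R, RuleVariant (l2, r2) q) ∧
  VarsDisjoint (l1, r1) (l2, r2) ∧
  FunPos p l2 ∧
  (∃ w, subt p l2 = some w ∧ ∃ σ, Unifier σ l1 w) ∧
  (p = [] → ¬ RuleVariant (l1, r1) (l2, r2))

def CPeak (R : TRS F V) (t : Term F V) (p : List ℕ) (s u : Term F V) : Prop :=
  ∃ (l1 r1 l2 r2 : Term F V) (σ : V → Term F V) (w : Term F V),
    Overlap R l1 r1 p l2 r2 ∧ subt p l2 = some w ∧ IsMGU σ l1 w ∧
    s = l2.subst σ ∧ u = r2.subst σ ∧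
    repl p (l2.subst σ) (r1.subst σ) = some t

def PrimeCPeak (R : TRS F V) (t : Term F V) (p : List ℕ) (s u : Term F V) : Prop :=
  CPeak R t p s u ∧
  ∀ w v, subt p s = some w → (∃ q, q ≠ [] ∧ subt q w = some v) → NF (Step R) v

def PCP (R : TRS F V) : Set (Term F V × Term F V) :=
  { e | ∃ p s, PrimeCPeak R e.1 p s e.2 }

def Nabla (R : TRS F V) (s u w : Term F V) : Prop :=
  Relation.TransGen (Step R) s u ∧ Relation.TransGen (Step R) s w ∧
  (Joinable (Step R) u w ∨ SymmCl (Step (PCP R)) u w)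

-- counted conversions and rewrite sequences
inductive ConvN {α : Type _} (r : α → α → Prop) : ℕ → ℕ → α → α → Prop where
  | refl (a : α) : ConvN r 0 0 a a
  | fwd {l n : ℕ} {a b c : α} : r a b → ConvN r l n b c → ConvN r l (n + 1) a c
  | bwd {l n : ℕ} {a b c : α} : r b a → ConvN r l n b c → ConvN r (l + 1) n a c

inductive StepsN {α : Type _} (r : α → α → Prop) : ℕ → α → α → Prop where
  | refl (a : α) : StepsN r 0 a a
  | step {n : ℕ} {a b c : α} : r a b → StepsN r n b c → StepsN r (n + 1) a c

def RandomDescent {α : Type _} (r : α → α → Prop) : Prop :=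
  ∀ l m a b, ConvN r l m a b → NF r b → ∃ n, StepsN r n a b ∧ n + l = m


section Aux

open Classical in
/-- Number of positions whose subterm is reducible. -/
noncomputable def count (R : TRS F V) : Term F V → ℕ
  | .var x => if ∃ u, Step R (.var x) u then 1 else 0
  | .app f ts =>
      (if ∃ u, Step R (.app f ts) u then 1 else 0) +
        (ts.attach.map fun t => count R t.1).sum
decreasing_by
  simp only [Term.app.sizeOf_spec]
  have := List.sizeOf_lt_of_mem t.2
  omega

open Classical in
theorem count_app (R : TRS F V) (f : F) (ts : List (Term F V)) :
    count R (Term.app f ts) =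
      (if ∃ u, Step R (.app f ts) u then 1 else 0) + (ts.map (count R)).sum := by
  rw [count]
  congr 1
  rw [List.attach_map_val]

def Ctx.comp : Ctx F V → Ctx F V → Ctx F V
  | .hole, D => D
  | .cons f l C r, D => .cons f l (C.comp D) r

theorem Ctx.fill_comp (C D : Ctx F V) (t : Term F V) :
    (C.comp D).fill t = C.fill (D.fill t) := by
  induction C with
  | hole => rfl
  | cons f l C r ih => simp [Ctx.comp, Ctx.fill, ih]

theorem step_ctx {R : TRS F V} {s t : Term F V} (C : Ctx F V)
    (h : Step R s t) : Step R (C.fill s) (C.fill t) := by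
  obtain ⟨D, σ, l, r, hmem, hs, ht⟩ := h
  exact ⟨C.comp D, σ, l, r, hmem, by rw [hs, Ctx.fill_comp],
    by rw [ht, Ctx.fill_comp]⟩

theorem ground_subst {t : Term F V} (h : Ground t) (σ : V → Term F V) :
    t.subst σ = t := by
  induction h with
  | app h ih =>
    rw [Term.subst]
    congr 1
    calc _ = (List.attach _).map (fun t => t.1) := by
            apply List.map_congr_left
            intro a _
            exact ih a.1 a.2
      _ = _ := by simpa using List.attach_map_subtype_val _

theorem nf_sub {R : TRS F V} {f : F} {ts : List (Term F V)} {t : Term F V}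
    (h : NF (Step R) (Term.app f ts)) (hm : t ∈ ts) : NF (Step R) t := by
  obtain ⟨l, r, rfl⟩ := List.append_of_mem hm
  intro u hu
  exact h (Term.app f (l ++ u :: r)) (step_ctx (Ctx.cons f l Ctx.hole r) hu)

open Classical in
theorem count_nf (R : TRS F V) : ∀ t : Term F V, NF (Step R) t → count R t = 0
  | .var x, h => by
      rw [count, if_neg]
      rintro ⟨u, hu⟩
      exact h u hu
  | .app f ts, h => by
      have hnr : ¬ ∃ u, Step R (Term.app f ts) u := by
        rintro ⟨u, hu⟩; exact h u hu
      rw [count_app, if_neg hnr, Nat.zero_add]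
      apply List.sum_eq_zero
      intro x hx
      obtain ⟨t, ht, rfl⟩ := List.mem_map.mp hx
      exact count_nf R t (nf_sub h ht)
decreasing_by
  simp only [Term.app.sizeOf_spec]
  have := List.sizeOf_lt_of_mem ht
  omega

open Classical in
theorem one_le_count {R : TRS F V} {t : Term F V} (h : ∃ u, Step R t u) :
    1 ≤ count R t := by
  cases t with
  | var x => rw [count, if_pos h]
  | app f ts => rw [count_app, if_pos h]; omega

theorem count_fill_lt {R : TRS F V} {s t : Term F V} (C : Ctx F V)
    (hs : ∃ u, Step R s u) (h : count R t < count R s) :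
    count R (C.fill t) < count R (C.fill s) := by
  classical
  induction C with
  | hole => exact h
  | cons f l C r ih =>
    simp only [Ctx.fill, count_app, List.map_append, List.map_cons,
      List.sum_append, List.sum_cons]
    have h1 : (if ∃ u, Step R (Term.app f (l ++ C.fill s :: r)) u then 1 else 0) = 1 := by
      rw [if_pos]
      obtain ⟨u, hu⟩ := hs
      exact ⟨_, step_ctx (Ctx.cons f l C r) hu⟩
    have h2 : (if ∃ u, Step R (Term.app f (l ++ C.fill t :: r)) u then 1 else 0) ≤ 1 := by
      split <;> omega
    have := ih
    omega

theorem step_count_lt {R : TRS F V} (hG : GroundSys R) (hRR : RightReduced R)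
    {s t : Term F V} (h : Step R s t) : count R t < count R s := by
  obtain ⟨C, σ, l, r, hmem, rfl, rfl⟩ := h
  have hgr : Ground r := (hG _ hmem).2
  have hred : ∃ u, Step R (l.subst σ) u :=
    ⟨r.subst σ, ⟨Ctx.hole, σ, l, r, hmem, rfl, rfl⟩⟩
  apply count_fill_lt C hred
  rw [ground_subst hgr]
  have : count R r = 0 := count_nf R r (hRR _ hmem)
  have := one_le_count hred
  omega

end Aux

/-- Right-reduced ground TRSs are terminating. -/
theorem right_reduced_ground_terminating {F V : Type} (R : TRS F V)
    (hG : GroundSys R) (hRR : RightReduced R) :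
    Terminating (Step R) :=
  Subrelation.wf (fun {_ _} h => step_count_lt hG hRR h)
    (InvImage.wf (count R) Nat.lt_wfRel.wf)

end KB
end

section
/- Starting from a finite set of ground equations, the inference system of ground completion (orient, delete, compose, simplify, collapse — without deduce) admits no infinite runs. -/
namespace KB

variable {F V : Type}

inductive KBg (gt : Term F V → Term F V → Prop) :
    Set (Term F V × Term F V) × TRS F V → Set (Term F V × Term F V) × TRS F V → Prop where
  | orientl {E : Set (Term F V × Term F V)} {R : TRS F V} {s t : Term F V} :
      (s, t) ∉ E → gt s t → KBg gt (insert (s, t) E, R) (E, insert (s, t) R)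
  | orientr {E : Set (Term F V × Term F V)} {R : TRS F V} {s t : Term F V} :
      (s, t) ∉ E → gt t s → KBg gt (insert (s, t) E, R) (E, insert (t, s) R)
  | delete {E : Set (Term F V × Term F V)} {R : TRS F V} {s : Term F V} :
      (s, s) ∉ E → KBg gt (insert (s, s) E, R) (E, R)
  | compose {E : Set (Term F V × Term F V)} {R : TRS F V} {s t u : Term F V} :
      (s, t) ∉ R → Step R t u → KBg gt (E, insert (s, t) R) (E, insert (s, u) R)
  | simplifyl {E : Set (Term F V × Term F V)} {R : TRS F V} {s t u : Term F V} :
      (s, t) ∉ E → Step R s u → KBg gt (insert (s, t) E, R) (insert (u, t) E, R)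
  | simplifyr {E : Set (Term F V × Term F V)} {R : TRS F V} {s t u : Term F V} :
      (s, t) ∉ E → Step R t u → KBg gt (insert (s, t) E, R) (insert (s, u) E, R)
  | collapse {E : Set (Term F V × Term F V)} {R : TRS F V} {t s u : Term F V} :
      (t, s) ∉ R → Step R t u → KBg gt (E, insert (t, s) R) (insert (u, s) E, R)


/-! ### Auxiliary material for the termination proof -/

section TerminationProof

open Finsupp OrderDual

/-- The measure space: finitely supported multiplicity functions over ordinals,
compared lexicographically with larger ordinals more significant. -/
abbrev Msr := Ordinal.{0}ᵒᵈ →₀ ℕ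

noncomputable def sng (o : Ordinal.{0}) (n : ℕ) : Msr := Finsupp.single (toDual o) n

lemma lex_lt_of_witness {x y : Msr} (i : Ordinal.{0}ᵒᵈ) (h1 : ∀ j < i, x j = y j)
    (h2 : x i < y i) : toLex x < toLex y :=
  Finsupp.Lex.lt_iff.2 ⟨i, h1, h2⟩

lemma lex_add_left {A B : Msr} (h : toLex A < toLex B) (X : Msr) :
    toLex (X + A) < toLex (X + B) := by
  obtain ⟨i, h1, h2⟩ := h
  simp only [ofLex_toLex] at h1 h2
  refine lex_lt_of_witness i (fun j hj => ?_) ?_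
  · simp [Finsupp.add_apply, h1 j hj]
  · simp only [Finsupp.add_apply]
    omega

lemma ne_of_gt_dual {a b : Ordinal.{0}} {j : Ordinal.{0}ᵒᵈ} (hj : j < toDual b)
    (hab : a ≤ b) : toDual a ≠ j := by
  intro h
  have hb : b < ofDual j := hj
  rw [← h] at hb
  simp only [ofDual_toDual] at hb
  exact absurd (hab.trans_lt hb) (lt_irrefl a)

lemma sng_lt_sng_of_lt {a b : Ordinal.{0}} (hab : a < b) {m n : ℕ} (hn : 0 < n) :
    toLex (sng a m) < toLex (sng b n) := by
  refine lex_lt_of_witness (toDual b) (fun j hj => ?_) ?_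
  · simp [sng, Finsupp.single_eq_of_ne' (ne_of_gt_dual hj hab.le),
      Finsupp.single_eq_of_ne' (ne_of_gt_dual hj le_rfl)]
  · have h1 : toDual a ≠ toDual b := by simpa using hab.ne
    simp only [sng, Finsupp.single_eq_of_ne' h1, Finsupp.single_eq_same]
    exact hn

lemma sng_lt_sng_same {a : Ordinal.{0}} {m n : ℕ} (h : m < n) :
    toLex (sng a m) < toLex (sng a n) := by
  refine lex_lt_of_witness (toDual a) (fun j hj => ?_) ?_
  · simp [sng, Finsupp.single_eq_of_ne' (ne_of_gt_dual hj le_rfl)]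
  · simpa [sng, Finsupp.single_eq_same] using h

lemma zero_lt_sng_add_sng {a : Ordinal.{0}} {m n : ℕ} (h : 0 < m) :
    toLex (0 : Msr) < toLex (sng a m + sng a n) := by
  refine lex_lt_of_witness (toDual a) (fun j hj => ?_) ?_
  · simp [sng, Finsupp.single_eq_of_ne' (ne_of_gt_dual hj le_rfl)]
  · simp only [sng, Finsupp.coe_zero, Pi.zero_apply, Finsupp.add_apply,
      Finsupp.single_eq_same]
    omega

lemma collapse_lex {u s t : Ordinal.{0}} (hu : u < t) (hs : s < t) :
    toLex (sng u 2 + sng s 2) < toLex (sng t 2 + sng s 1) := by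
  refine lex_lt_of_witness (toDual t) (fun j hj => ?_) ?_
  · simp [sng, Finsupp.single_eq_of_ne' (ne_of_gt_dual hj hu.le),
      Finsupp.single_eq_of_ne' (ne_of_gt_dual hj hs.le),
      Finsupp.single_eq_of_ne' (ne_of_gt_dual hj le_rfl)]
  · have h1 : toDual u ≠ toDual t := by simpa using hu.ne
    have h2 : toDual s ≠ toDual t := by simpa using hs.ne
    simp [sng, Finsupp.single_eq_of_ne' h1, Finsupp.single_eq_of_ne' h2,
      Finsupp.single_eq_same]

lemma sum_insert_le {α : Type _} (w : α → Msr) {s : Set α} (a : α) (hs : s.Finite) :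
    ∑ᶠ p ∈ insert a s, w p ≤ w a + ∑ᶠ p ∈ s, w p := by
  by_cases h : a ∈ s
  · rw [Set.insert_eq_self.2 h]
    exact le_add_self
  · rw [finsum_mem_insert w h hs]

variable {F V : Type}

/-- Weight of an equation. -/
noncomputable def wEq (rk : Term F V → Ordinal.{0}) (p : Term F V × Term F V) : Msr :=
  sng (rk p.1) 2 + sng (rk p.2) 2

/-- Weight of a rule. -/
noncomputable def wRl (rk : Term F V → Ordinal.{0}) (p : Term F V × Term F V) : Msr :=
  sng (rk p.1) 2 + sng (rk p.2) 1

/-- The measure of a state. -/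
noncomputable def mu (rk : Term F V → Ordinal.{0})
    (x : Set (Term F V × Term F V) × TRS F V) : Msr :=
  (∑ᶠ p ∈ x.1, wEq rk p) + ∑ᶠ p ∈ x.2, wRl rk p

/-- Invariant maintained by runs: both components finite, rules oriented. -/
def Inv (gt : Term F V → Term F V → Prop)
    (x : Set (Term F V × Term F V) × TRS F V) : Prop :=
  x.1.Finite ∧ x.2.Finite ∧ ∀ p ∈ x.2, gt p.1 p.2

lemma step_gt {gt : Term F V → Term F V → Prop} (hgt : ReductionOrder gt) {R : TRS F V}
    (hor : ∀ p ∈ R, gt p.1 p.2) {s u : Term F V} (h : Step R s u) : gt s u := by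
  obtain ⟨C, σ, l, r, hlr, rfl, rfl⟩ := h
  exact hgt.2.2.1 C _ _ (hgt.2.2.2 σ l r (hor (l, r) hlr))

lemma inv_preserved {gt : Term F V → Term F V → Prop} (hgt : ReductionOrder gt)
    {x y : Set (Term F V × Term F V) × TRS F V} (h : KBg gt x y) (hx : Inv gt x) :
    Inv gt y := by
  cases h with
  | @orientl E R s t hnot hst =>
      obtain ⟨hE, hR, hor⟩ := hx
      refine ⟨hE.subset (Set.subset_insert _ _), hR.insert _, fun p hp => ?_⟩
      rcases Set.mem_insert_iff.1 hp with rfl | hp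
      · exact hst
      · exact hor p hp
  | @orientr E R s t hnot hts =>
      obtain ⟨hE, hR, hor⟩ := hx
      refine ⟨hE.subset (Set.subset_insert _ _), hR.insert _, fun p hp => ?_⟩
      rcases Set.mem_insert_iff.1 hp with rfl | hp
      · exact hts
      · exact hor p hp
  | @delete E R s hnot =>
      obtain ⟨hE, hR, hor⟩ := hx
      exact ⟨hE.subset (Set.subset_insert _ _), hR, hor⟩
  | @compose E R s t u hnot hstep =>
      obtain ⟨hE, hR, hor⟩ := hx
      have hR' : R.Finite := hR.subset (Set.subset_insert _ _)
      have hor' : ∀ p ∈ R, gt p.1 p.2 := fun p hp => hor p (Set.subset_insert _ _ hp)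
      refine ⟨hE, hR'.insert _, fun p hp => ?_⟩
      rcases Set.mem_insert_iff.1 hp with rfl | hp
      · exact hgt.1 (hor (s, t) (Set.mem_insert _ _)) (step_gt hgt hor' hstep)
      · exact hor' p hp
  | @simplifyl E R s t u hnot hstep =>
      obtain ⟨hE, hR, hor⟩ := hx
      exact ⟨(hE.subset (Set.subset_insert _ _)).insert _, hR, hor⟩
  | @simplifyr E R s t u hnot hstep =>
      obtain ⟨hE, hR, hor⟩ := hx
      exact ⟨(hE.subset (Set.subset_insert _ _)).insert _, hR, hor⟩
  | @collapse E R t s u hnot hstep =>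
      obtain ⟨hE, hR, hor⟩ := hx
      exact ⟨hE.insert _, hR.subset (Set.subset_insert _ _),
        fun p hp => hor p (Set.subset_insert _ _ hp)⟩

lemma mu_lt_of_le_of_lt {a x S A B : Msr} (h1 : a ≤ S + A) (h2 : x = S + B)
    (h3 : toLex A < toLex B) : toLex a < toLex x := by
  rw [h2]
  exact lt_of_le_of_lt (Finsupp.toLex_monotone h1) (lex_add_left h3 S)

lemma mu_decreases {gt : Term F V → Term F V → Prop} (hgt : ReductionOrder gt)
    (rk : Term F V → Ordinal.{0}) (hrk : ∀ {a b}, gt a b → rk b < rk a)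
    {x y : Set (Term F V × Term F V) × TRS F V} (h : KBg gt x y) (hx : Inv gt x) :
    toLex (mu rk y) < toLex (mu rk x) := by
  cases h with
  | @orientl E R s t hnot hst =>
      obtain ⟨hE', hR, hor⟩ := hx
      have hE : E.Finite := hE'.subset (Set.subset_insert _ _)
      refine mu_lt_of_le_of_lt (S := (∑ᶠ p ∈ E, wEq rk p) + ∑ᶠ p ∈ R, wRl rk p)
        (A := wRl rk (s, t)) (B := wEq rk (s, t)) ?_ ?_ ?_
      · show (∑ᶠ p ∈ E, wEq rk p) + (∑ᶠ p ∈ insert (s, t) R, wRl rk p) ≤ _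
        calc (∑ᶠ p ∈ E, wEq rk p) + (∑ᶠ p ∈ insert (s, t) R, wRl rk p)
            ≤ (∑ᶠ p ∈ E, wEq rk p) + (wRl rk (s, t) + ∑ᶠ p ∈ R, wRl rk p) :=
              add_le_add_right (sum_insert_le _ _ hR) _
          _ = _ := by abel
      · show (∑ᶠ p ∈ insert (s, t) E, wEq rk p) + (∑ᶠ p ∈ R, wRl rk p) = _
        rw [finsum_mem_insert _ hnot hE]
        abel
      · show toLex (sng (rk s) 2 + sng (rk t) 1) < toLex (sng (rk s) 2 + sng (rk t) 2)
        exact lex_add_left (sng_lt_sng_same one_lt_two) _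
  | @orientr E R s t hnot hts =>
      obtain ⟨hE', hR, hor⟩ := hx
      have hE : E.Finite := hE'.subset (Set.subset_insert _ _)
      refine mu_lt_of_le_of_lt (S := (∑ᶠ p ∈ E, wEq rk p) + ∑ᶠ p ∈ R, wRl rk p)
        (A := wRl rk (t, s)) (B := wEq rk (s, t)) ?_ ?_ ?_
      · show (∑ᶠ p ∈ E, wEq rk p) + (∑ᶠ p ∈ insert (t, s) R, wRl rk p) ≤ _
        calc (∑ᶠ p ∈ E, wEq rk p) + (∑ᶠ p ∈ insert (t, s) R, wRl rk p)
            ≤ (∑ᶠ p ∈ E, wEq rk p) + (wRl rk (t, s) + ∑ᶠ p ∈ R, wRl rk p) :=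
              add_le_add_right (sum_insert_le _ _ hR) _
          _ = _ := by abel
      · show (∑ᶠ p ∈ insert (s, t) E, wEq rk p) + (∑ᶠ p ∈ R, wRl rk p) = _
        rw [finsum_mem_insert _ hnot hE]
        abel
      · show toLex (sng (rk t) 2 + sng (rk s) 1) < toLex (sng (rk s) 2 + sng (rk t) 2)
        rw [show sng (rk s) 2 + sng (rk t) 2 = sng (rk t) 2 + sng (rk s) 2 from
          add_comm _ _]
        exact lex_add_left (sng_lt_sng_same one_lt_two) _
  | @delete E R s hnot =>
      obtain ⟨hE', hR, hor⟩ := hx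
      have hE : E.Finite := hE'.subset (Set.subset_insert _ _)
      refine mu_lt_of_le_of_lt (S := (∑ᶠ p ∈ E, wEq rk p) + ∑ᶠ p ∈ R, wRl rk p)
        (A := 0) (B := wEq rk (s, s)) ?_ ?_ ?_
      · show (∑ᶠ p ∈ E, wEq rk p) + (∑ᶠ p ∈ R, wRl rk p) ≤ _
        rw [add_zero]
      · show (∑ᶠ p ∈ insert (s, s) E, wEq rk p) + (∑ᶠ p ∈ R, wRl rk p) = _
        rw [finsum_mem_insert _ hnot hE]
        abel
      · exact zero_lt_sng_add_sng two_pos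
  | @compose E R s t u hnot hstep =>
      obtain ⟨hE, hR', hor⟩ := hx
      have hR : R.Finite := hR'.subset (Set.subset_insert _ _)
      have hor' : ∀ p ∈ R, gt p.1 p.2 := fun p hp => hor p (Set.subset_insert _ _ hp)
      have htu : gt t u := step_gt hgt hor' hstep
      refine mu_lt_of_le_of_lt
        (S := (∑ᶠ p ∈ E, wEq rk p) + (∑ᶠ p ∈ R, wRl rk p) + sng (rk s) 2)
        (A := sng (rk u) 1) (B := sng (rk t) 1) ?_ ?_ ?_
      · show (∑ᶠ p ∈ E, wEq rk p) + (∑ᶠ p ∈ insert (s, u) R, wRl rk p) ≤ _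
        calc (∑ᶠ p ∈ E, wEq rk p) + (∑ᶠ p ∈ insert (s, u) R, wRl rk p)
            ≤ (∑ᶠ p ∈ E, wEq rk p) + (wRl rk (s, u) + ∑ᶠ p ∈ R, wRl rk p) :=
              add_le_add_right (sum_insert_le _ _ hR) _
          _ = _ := by simp only [wRl]; abel
      · show (∑ᶠ p ∈ E, wEq rk p) + (∑ᶠ p ∈ insert (s, t) R, wRl rk p) = _
        rw [finsum_mem_insert _ hnot hR]
        simp only [wRl]
        abel
      · exact sng_lt_sng_of_lt (hrk htu) one_pos
  | @simplifyl E R s t u hnot hstep =>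
      obtain ⟨hE', hR, hor⟩ := hx
      have hE : E.Finite := hE'.subset (Set.subset_insert _ _)
      have hsu : gt s u := step_gt hgt hor hstep
      refine mu_lt_of_le_of_lt
        (S := (∑ᶠ p ∈ E, wEq rk p) + (∑ᶠ p ∈ R, wRl rk p) + sng (rk t) 2)
        (A := sng (rk u) 2) (B := sng (rk s) 2) ?_ ?_ ?_
      · show (∑ᶠ p ∈ insert (u, t) E, wEq rk p) + (∑ᶠ p ∈ R, wRl rk p) ≤ _
        calc (∑ᶠ p ∈ insert (u, t) E, wEq rk p) + (∑ᶠ p ∈ R, wRl rk p)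
            ≤ (wEq rk (u, t) + ∑ᶠ p ∈ E, wEq rk p) + (∑ᶠ p ∈ R, wRl rk p) :=
              add_le_add_left (sum_insert_le _ _ hE) _
          _ = _ := by simp only [wEq]; abel
      · show (∑ᶠ p ∈ insert (s, t) E, wEq rk p) + (∑ᶠ p ∈ R, wRl rk p) = _
        rw [finsum_mem_insert _ hnot hE]
        simp only [wEq]
        abel
      · exact sng_lt_sng_of_lt (hrk hsu) two_pos
  | @simplifyr E R s t u hnot hstep =>
      obtain ⟨hE', hR, hor⟩ := hx
      have hE : E.Finite := hE'.subset (Set.subset_insert _ _)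
      have htu : gt t u := step_gt hgt hor hstep
      refine mu_lt_of_le_of_lt
        (S := (∑ᶠ p ∈ E, wEq rk p) + (∑ᶠ p ∈ R, wRl rk p) + sng (rk s) 2)
        (A := sng (rk u) 2) (B := sng (rk t) 2) ?_ ?_ ?_
      · show (∑ᶠ p ∈ insert (s, u) E, wEq rk p) + (∑ᶠ p ∈ R, wRl rk p) ≤ _
        calc (∑ᶠ p ∈ insert (s, u) E, wEq rk p) + (∑ᶠ p ∈ R, wRl rk p)
            ≤ (wEq rk (s, u) + ∑ᶠ p ∈ E, wEq rk p) + (∑ᶠ p ∈ R, wRl rk p) :=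
              add_le_add_left (sum_insert_le _ _ hE) _
          _ = _ := by simp only [wEq]; abel
      · show (∑ᶠ p ∈ insert (s, t) E, wEq rk p) + (∑ᶠ p ∈ R, wRl rk p) = _
        rw [finsum_mem_insert _ hnot hE]
        simp only [wEq]
        abel
      · exact sng_lt_sng_of_lt (hrk htu) two_pos
  | @collapse E R t s u hnot hstep =>
      obtain ⟨hE, hR', hor⟩ := hx
      have hR : R.Finite := hR'.subset (Set.subset_insert _ _)
      have hor' : ∀ p ∈ R, gt p.1 p.2 := fun p hp => hor p (Set.subset_insert _ _ hp)
      have htu : gt t u := step_gt hgt hor' hstep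
      have hts : gt t s := hor (t, s) (Set.mem_insert _ _)
      refine mu_lt_of_le_of_lt (S := (∑ᶠ p ∈ E, wEq rk p) + ∑ᶠ p ∈ R, wRl rk p)
        (A := wEq rk (u, s)) (B := wRl rk (t, s)) ?_ ?_ ?_
      · show (∑ᶠ p ∈ insert (u, s) E, wEq rk p) + (∑ᶠ p ∈ R, wRl rk p) ≤ _
        calc (∑ᶠ p ∈ insert (u, s) E, wEq rk p) + (∑ᶠ p ∈ R, wRl rk p)
            ≤ (wEq rk (u, s) + ∑ᶠ p ∈ E, wEq rk p) + (∑ᶠ p ∈ R, wRl rk p) :=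
              add_le_add_left (sum_insert_le _ _ hE) _
          _ = _ := by abel
      · show (∑ᶠ p ∈ E, wEq rk p) + (∑ᶠ p ∈ insert (t, s) R, wRl rk p) = _
        rw [finsum_mem_insert _ hnot hR]
        abel
      · show toLex (sng (rk u) 2 + sng (rk s) 2) < toLex (sng (rk t) 2 + sng (rk s) 1)
        exact collapse_lex (hrk htu) (hrk hts)

lemma no_descending {α : Type _} {r : α → α → Prop} (hwf : WellFounded r) (g : ℕ → α)
    (hd : ∀ n, r (g (n + 1)) (g n)) : False := by
  have H : ∀ a, ∀ n, g n ≠ a := by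
    intro a
    induction a using hwf.induction with
    | _ a IH =>
        intro n hn
        exact IH _ (hn ▸ hd n) (n + 1) rfl
  exact H (g 0) 0 rfl

end TerminationProof

/-- Ground completion admits no infinite runs from a finite ground ES. -/
theorem ground_completion_terminates {F V : Type}
    (E0 : Set (Term F V × Term F V)) (hfin : E0.Finite)
    (hg : ∀ p ∈ E0, Ground p.1 ∧ Ground p.2)
    (gt : Term F V → Term F V → Prop) (hgt : ReductionOrder gt) :
    ¬ ∃ f : ℕ → Set (Term F V × Term F V) × TRS F V,
      f 0 = (E0, (∅ : TRS F V)) ∧ ∀ i, KBg gt (f i) (f (i + 1)) := by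
  rintro ⟨f, h0, hstep⟩
  haveI : IsWellFounded (Term F V) (fun a b => gt b a) := ⟨hgt.2.1⟩
  set rk : Term F V → Ordinal.{0} := IsWellFounded.rank (fun a b => gt b a) with hrkdef
  have hrk : ∀ {a b : Term F V}, gt a b → rk b < rk a := fun h =>
    IsWellFounded.rank_lt_of_rel (r := fun a b => gt b a) h
  have hInv : ∀ i, Inv gt (f i) := by
    intro i
    induction i with
    | zero =>
        rw [h0]
        exact ⟨hfin, Set.finite_empty, fun p hp => hp.elim⟩
    | succ n ih => exact inv_preserved hgt (hstep n) ih
  have hdec : ∀ i, toLex (mu rk (f (i + 1))) < toLex (mu rk (f i)) := fun i =>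
    mu_decreases hgt rk hrk (hstep i) (hInv i)
  exact no_descending (inferInstance : WellFoundedLT (Lex Msr)).wf
    (fun i => toLex (mu rk (f i))) hdec


end KB
end
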